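/- arXiv:2503.03324 — 2 statements merged into one kernel-verified Lean document; each statement's English description precedes it below -/
import Mathlib

section
/- Let X₁, …, Xₙ be independent nonnegative integrable random variables on a probability space and S_n = X₁ + … + Xₙ. Then 𝔼(S_n·log*(S_n)) ≤ 𝔼(S_n)·log*(𝔼(S_n)) + Σ_{i=1}^n 𝔼(X_i·log*(X_i)), with all expectations taken in [0,∞]. -/
open MeasureTheory ProbabilityTheory
open scoped ENNReal

noncomputable section

/-- The function `log*`: `log* x = x / e` for `x ≤ e` and `log* x = log x` for `x > e`. -/
def logStar (x : ℝ) : ℝ := if x ≤ Real.exp 1 then x / Real.exp 1 else Real.log x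

/-- intercept of a tangent line of `logStar` at `s`. -/
def logStarA (s : ℝ) : ℝ := if s ≤ Real.exp 1 then 0 else Real.log s - 1

/-- slope of a tangent line of `logStar` at `s`. -/
def logStarD (s : ℝ) : ℝ := if s ≤ Real.exp 1 then (Real.exp 1)⁻¹ else s⁻¹

lemma log_le_div_e {x : ℝ} (hx : 0 < x) : Real.log x ≤ x / Real.exp 1 := by
  have h := Real.log_le_sub_one_of_pos (show 0 < x / Real.exp 1 by positivity)
  rw [Real.log_div (ne_of_gt hx) (Real.exp_ne_zero 1), Real.log_exp] at h
  linarith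

lemma two_le_e : (2:ℝ) ≤ Real.exp 1 := by
  have := Real.add_one_le_exp (1:ℝ); linarith

lemma logStar_nonneg {x : ℝ} (hx : 0 ≤ x) : 0 ≤ logStar x := by
  unfold logStar
  split_ifs with h
  · positivity
  · push_neg at h
    have hx' : (0:ℝ) < x := lt_trans (Real.exp_pos 1) h
    have : (1:ℝ) ≤ Real.log x := by
      rw [Real.le_log_iff_exp_le hx']
      exact h.le
    linarith

lemma logStarA_nonneg (x : ℝ) : 0 ≤ logStarA x := by
  unfold logStarA
  split_ifs with h
  · exact le_refl 0
  · push_neg at h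
    have : (1:ℝ) ≤ Real.log x := by
      rw [Real.le_log_iff_exp_le (lt_trans (Real.exp_pos 1) h)]
      exact h.le
    linarith

lemma logStarD_nonneg (x : ℝ) : 0 ≤ logStarD x := by
  unfold logStarD
  split_ifs with h
  · positivity
  · push_neg at h
    have : (0:ℝ) < x := lt_trans (Real.exp_pos 1) h
    positivity

lemma logStar_eq_A_add_D (s : ℝ) : logStarA s + logStarD s * s = logStar s := by
  unfold logStar logStarA logStarD
  split_ifs with h
  · rw [zero_add, inv_mul_eq_div]
  · push_neg at h
    have hs : s ≠ 0 := (lt_trans (Real.exp_pos 1) h).ne'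
    rw [inv_mul_cancel₀ hs]; ring

lemma logStar_le_tangent (s₀ : ℝ) {s : ℝ} (hs : 0 ≤ s) :
    logStar s ≤ logStarA s₀ + logStarD s₀ * s := by
  have he : (0:ℝ) < Real.exp 1 := Real.exp_pos 1
  unfold logStar logStarA logStarD
  split_ifs with h1 h2 h2
  · rw [zero_add, inv_mul_eq_div]
  · push_neg at h2
    have hs₀ : (0:ℝ) < s₀ := lt_trans he h2
    have h3 : Real.log (Real.exp 1 / s₀) ≤ Real.exp 1 / s₀ - 1 :=
      Real.log_le_sub_one_of_pos (by positivity)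
    rw [Real.log_div (Real.exp_ne_zero 1) hs₀.ne', Real.log_exp] at h3
    have key : s * ((Real.exp 1)⁻¹ - s₀⁻¹) ≤ Real.exp 1 * ((Real.exp 1)⁻¹ - s₀⁻¹) := by
      apply mul_le_mul_of_nonneg_right h1
      have : s₀⁻¹ ≤ (Real.exp 1)⁻¹ := by
        apply inv_anti₀ he h2.le
      linarith
    have e1 : Real.exp 1 * ((Real.exp 1)⁻¹ - s₀⁻¹) = 1 - Real.exp 1 / s₀ := by
      field_simp
    have e2 : s * ((Real.exp 1)⁻¹ - s₀⁻¹) = s / Real.exp 1 - s₀⁻¹ * s := by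
      field_simp
    linarith
  · push_neg at h1
    have := log_le_div_e (lt_trans he h1)
    rw [div_eq_inv_mul] at this
    linarith
  · push_neg at h1 h2
    have hs₀ : (0:ℝ) < s₀ := lt_trans he h2
    have hspos : (0:ℝ) < s := lt_trans he h1
    have h3 : Real.log (s / s₀) ≤ s / s₀ - 1 := Real.log_le_sub_one_of_pos (by positivity)
    rw [Real.log_div hspos.ne' hs₀.ne'] at h3
    rw [div_eq_inv_mul] at h3
    linarith

lemma logStar_mono {a b : ℝ} (ha : 0 ≤ a) (hab : a ≤ b) : logStar a ≤ logStar b := by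
  have he : (0:ℝ) < Real.exp 1 := Real.exp_pos 1
  unfold logStar
  split_ifs with h1 h2 h2
  · gcongr
  · push_neg at h2
    have : (1:ℝ) ≤ Real.log b := by
      rw [Real.le_log_iff_exp_le (lt_trans he h2)]; exact h2.le
    have : a / Real.exp 1 ≤ 1 := by
      rw [div_le_one he]; exact h1
    linarith
  · push_neg at h1; linarith
  · push_neg at h1 h2
    exact Real.log_le_log (lt_trans he h1) hab

lemma logStar_add_le {a b : ℝ} (ha : 0 ≤ a) (hb : 0 ≤ b) :
    logStar (a + b) ≤ logStar a + logStar b := by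
  have he : (0:ℝ) < Real.exp 1 := Real.exp_pos 1
  have h2e := two_le_e
  unfold logStar
  by_cases hab : a + b ≤ Real.exp 1
  · rw [if_pos hab, if_pos (by linarith), if_pos (by linarith), add_div]
  · rw [if_neg hab]
    push_neg at hab
    have habpos : (0:ℝ) < a + b := lt_trans he hab
    split_ifs with h1 h2 h2
    · calc Real.log (a+b) ≤ (a+b)/Real.exp 1 := log_le_div_e habpos
        _ = a / Real.exp 1 + b / Real.exp 1 := add_div _ _ _
    · push_neg at h2
      have hbpos : (0:ℝ) < b := lt_trans he h2
      have h3 : Real.log ((a+b)/b) ≤ (a+b)/b - 1 := Real.log_le_sub_one_of_pos (by positivity)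
      rw [Real.log_div habpos.ne' hbpos.ne'] at h3
      have h4 : (a+b)/b - 1 = a/b := by field_simp; ring
      have h5 : a/b ≤ a/Real.exp 1 := by gcongr
      linarith
    · push_neg at h1
      have hapos : (0:ℝ) < a := lt_trans he h1
      have h3 : Real.log ((a+b)/a) ≤ (a+b)/a - 1 := Real.log_le_sub_one_of_pos (by positivity)
      rw [Real.log_div habpos.ne' hapos.ne'] at h3
      have h4 : (a+b)/a - 1 = b/a := by field_simp; ring
      have h5 : b/a ≤ b/Real.exp 1 := by gcongr
      linarith
    · push_neg at h1 h2
      have hapos : (0:ℝ) < a := lt_trans he h1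
      have hbpos : (0:ℝ) < b := lt_trans he h2
      rw [← Real.log_mul hapos.ne' hbpos.ne']
      apply Real.log_le_log habpos
      nlinarith

lemma measurable_logStar : Measurable logStar :=
  Measurable.ite (measurableSet_le measurable_id measurable_const)
    (measurable_id.div_const _) Real.measurable_log

lemma measurable_logStarA : Measurable logStarA :=
  Measurable.ite (measurableSet_le measurable_id measurable_const)
    measurable_const (Real.measurable_log.sub measurable_const)

lemma measurable_logStarD : Measurable logStarD :=
  Measurable.ite (measurableSet_le measurable_id measurable_const)
    measurable_const measurable_inv

/-- Lemma A.1 of Asmussen–Hering: for independent nonnegative integrable random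
variables `X₁, …, Xₙ` with sum `Sₙ`,
`𝔼(Sₙ log* Sₙ) ≤ 𝔼(Sₙ)·log*(𝔼 Sₙ) + Σᵢ 𝔼(Xᵢ log* Xᵢ)`, with expectations in `[0,∞]`. -/
theorem sum_mul_logStar_le
    {Ω : Type*} [MeasurableSpace Ω] (μ : Measure Ω) [IsProbabilityMeasure μ]
    (n : ℕ) (X : Fin n → Ω → ℝ)
    (hmeas : ∀ i, Measurable (X i))
    (hindep : iIndepFun X μ)
    (hnonneg : ∀ i ω, 0 ≤ X i ω)
    (hint : ∀ i, Integrable (X i) μ) :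
    ∫⁻ ω, ENNReal.ofReal ((∑ i, X i ω) * logStar (∑ i, X i ω)) ∂ μ
      ≤ ENNReal.ofReal ((∫ ω, ∑ i, X i ω ∂ μ) * logStar (∫ ω, ∑ i, X i ω ∂ μ))
        + ∑ i, ∫⁻ ω, ENNReal.ofReal (X i ω * logStar (X i ω)) ∂ μ := by
  classical
  have hS_meas : Measurable (fun ω => ∑ i, X i ω) :=
    Finset.measurable_sum _ fun i _ => hmeas i
  have hS_nonneg : ∀ ω, 0 ≤ ∑ i, X i ω := fun ω => Finset.sum_nonneg fun i _ => hnonneg i ω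
  set m := ∫ ω, ∑ i, X i ω ∂μ with hm_def
  have hm_sum : m = ∑ i, ∫ ω, X i ω ∂μ := integral_finset_sum _ fun i _ => hint i
  have hmi_nonneg : ∀ i, 0 ≤ ∫ ω, X i ω ∂μ := fun i => integral_nonneg (hnonneg i)
  have hm_nonneg : 0 ≤ m := hm_sum ▸ Finset.sum_nonneg fun i _ => hmi_nonneg i
  -- Step A : split the left side as a sum
  have hA : ∫⁻ ω, ENNReal.ofReal ((∑ i, X i ω) * logStar (∑ i, X i ω)) ∂μ
      = ∑ i, ∫⁻ ω, ENNReal.ofReal (X i ω * logStar (∑ j, X j ω)) ∂μ := by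
    rw [← lintegral_finset_sum]
    · apply lintegral_congr; intro ω
      rw [← ENNReal.ofReal_sum_of_nonneg
        (fun i _ => mul_nonneg (hnonneg i ω) (logStar_nonneg (hS_nonneg ω))), ← Finset.sum_mul]
    · exact fun i _ => ((hmeas i).mul (measurable_logStar.comp hS_meas)).ennreal_ofReal
  rw [hA]
  -- Step B : per-index estimate
  have hB : ∀ i, ∫⁻ ω, ENNReal.ofReal (X i ω * logStar (∑ j, X j ω)) ∂μ
      ≤ ∫⁻ ω, ENNReal.ofReal (X i ω * logStar (X i ω)) ∂μ
        + ENNReal.ofReal ((∫ ω, X i ω ∂μ) * logStar m) := by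
    intro i
    set T : Ω → ℝ := fun ω => ∑ j ∈ Finset.univ.erase i, X j ω with hT_def
    have hT_meas : Measurable T := Finset.measurable_sum _ fun j _ => hmeas j
    have hT_nonneg : ∀ ω, 0 ≤ T ω := fun ω => Finset.sum_nonneg fun j _ => hnonneg j ω
    have hT_int : Integrable T μ := integrable_finset_sum _ fun j _ => hint j
    have hindepT : IndepFun (X i) T μ := by
      have h1 := (hindep.indepFun_finsetSum_of_notMem hmeas
        (Finset.notMem_erase i Finset.univ)).symm
      have h2 : (∑ j ∈ Finset.univ.erase i, X j) = T := by
        funext ω; rw [Finset.sum_apply]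
      rwa [h2] at h1
    set τ := ∫ ω, T ω ∂μ with hτ_def
    have hτ_nonneg : 0 ≤ τ := integral_nonneg hT_nonneg
    have hS_split : ∀ ω, (∑ j, X j ω) = X i ω + T ω := fun ω =>
      (Finset.add_sum_erase _ _ (Finset.mem_univ i)).symm
    have hτm : τ ≤ m := by
      have hmeq : m = (∫ ω, X i ω ∂μ) + τ := by
        rw [hm_def, hτ_def, ← integral_add (hint i) hT_int]
        apply integral_congr_ae; filter_upwards with ω; exact hS_split ω
      have := hmi_nonneg i; linarith
    set g : ℝ → ℝ := fun x => x * logStarA (x + τ) + x * logStarD (x + τ) * x with hg_def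
    set h : ℝ → ℝ := fun x => x * logStarD (x + τ) with hh_def
    have hg_meas : Measurable g :=
      ((measurable_id.mul (measurable_logStarA.comp (measurable_id.add_const τ)))).add
        (((measurable_id.mul (measurable_logStarD.comp (measurable_id.add_const τ)))).mul
          measurable_id)
    have hh_meas : Measurable h :=
      measurable_id.mul (measurable_logStarD.comp (measurable_id.add_const τ))
    have hg_nonneg : ∀ x : ℝ, 0 ≤ x → 0 ≤ g x := fun x hx => by
      have := logStarA_nonneg (x + τ); have := logStarD_nonneg (x + τ)
      simp only [hg_def]; positivity
    have hh_nonneg : ∀ x : ℝ, 0 ≤ x → 0 ≤ h x := fun x hx => by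
      have := logStarD_nonneg (x + τ)
      simp only [hh_def]; positivity
    -- pointwise tangent bound
    have hpt : ∀ ω, ENNReal.ofReal (X i ω * logStar (∑ j, X j ω))
        ≤ ENNReal.ofReal (g (X i ω)) + ENNReal.ofReal (h (X i ω)) * ENNReal.ofReal (T ω) := by
      intro ω
      rw [← ENNReal.ofReal_mul (hh_nonneg _ (hnonneg i ω)),
        ← ENNReal.ofReal_add (hg_nonneg _ (hnonneg i ω))
          (mul_nonneg (hh_nonneg _ (hnonneg i ω)) (hT_nonneg ω))]
      apply ENNReal.ofReal_le_ofReal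
      rw [hS_split ω]
      have hb : logStar (X i ω + T ω)
          ≤ logStarA (X i ω + τ) + logStarD (X i ω + τ) * (X i ω + T ω) :=
        logStar_le_tangent _ (add_nonneg (hnonneg i ω) (hT_nonneg ω))
      calc X i ω * logStar (X i ω + T ω)
          ≤ X i ω * (logStarA (X i ω + τ) + logStarD (X i ω + τ) * (X i ω + T ω)) :=
            mul_le_mul_of_nonneg_left hb (hnonneg i ω)
        _ = g (X i ω) + h (X i ω) * T ω := by simp only [hg_def, hh_def]; ring
    have hgXmeas : Measurable fun ω => ENNReal.ofReal (g (X i ω)) :=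
      (hg_meas.comp (hmeas i)).ennreal_ofReal
    have hhXmeas : Measurable fun ω => ENNReal.ofReal (h (X i ω)) :=
      (hh_meas.comp (hmeas i)).ennreal_ofReal
    calc ∫⁻ ω, ENNReal.ofReal (X i ω * logStar (∑ j, X j ω)) ∂μ
        ≤ ∫⁻ ω, (ENNReal.ofReal (g (X i ω))
            + ENNReal.ofReal (h (X i ω)) * ENNReal.ofReal (T ω)) ∂μ := lintegral_mono hpt
      _ = (∫⁻ ω, ENNReal.ofReal (g (X i ω)) ∂μ)
            + ∫⁻ ω, ENNReal.ofReal (h (X i ω)) * ENNReal.ofReal (T ω) ∂μ :=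
          lintegral_add_left hgXmeas _
      _ = (∫⁻ ω, ENNReal.ofReal (g (X i ω)) ∂μ)
            + (∫⁻ ω, ENNReal.ofReal (h (X i ω)) ∂μ) * ∫⁻ ω, ENNReal.ofReal (T ω) ∂μ := by
          congr 1
          apply lintegral_mul_eq_lintegral_mul_lintegral_of_indepFun''
            hhXmeas.aemeasurable (hT_meas.ennreal_ofReal).aemeasurable
          exact hindepT.comp ((hh_meas).ennreal_ofReal) ENNReal.measurable_ofReal
      _ = (∫⁻ ω, ENNReal.ofReal (g (X i ω)) ∂μ)
            + ∫⁻ ω, ENNReal.ofReal (h (X i ω) * τ) ∂μ := by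
          rw [← ofReal_integral_eq_lintegral_ofReal hT_int (ae_of_all _ hT_nonneg), ← hτ_def]
          rw [← lintegral_mul_const _ hhXmeas]
          congr 1
          apply lintegral_congr; intro ω
          rw [ENNReal.ofReal_mul (hh_nonneg _ (hnonneg i ω))]
      _ = ∫⁻ ω, ENNReal.ofReal (g (X i ω) + h (X i ω) * τ) ∂μ := by
          rw [← lintegral_add_left hgXmeas]
          apply lintegral_congr; intro ω
          rw [ENNReal.ofReal_add (hg_nonneg _ (hnonneg i ω))
            (mul_nonneg (hh_nonneg _ (hnonneg i ω)) hτ_nonneg)]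
      _ ≤ ∫⁻ ω, ENNReal.ofReal (X i ω * (logStar (X i ω) + logStar m)) ∂μ := by
          apply lintegral_mono; intro ω
          apply ENNReal.ofReal_le_ofReal
          have e1 : g (X i ω) + h (X i ω) * τ
              = X i ω * (logStarA (X i ω + τ) + logStarD (X i ω + τ) * (X i ω + τ)) := by
            simp only [hg_def, hh_def]; ring
          rw [e1, logStar_eq_A_add_D]
          apply mul_le_mul_of_nonneg_left _ (hnonneg i ω)
          calc logStar (X i ω + τ)
              ≤ logStar (X i ω + m) :=
                logStar_mono (add_nonneg (hnonneg i ω) hτ_nonneg) (by linarith)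
            _ ≤ logStar (X i ω) + logStar m := logStar_add_le (hnonneg i ω) hm_nonneg
      _ = ∫⁻ ω, ENNReal.ofReal (X i ω * logStar (X i ω)) ∂μ
            + ENNReal.ofReal ((∫ ω, X i ω ∂μ) * logStar m) := by
          have hsplit : ∀ ω, ENNReal.ofReal (X i ω * (logStar (X i ω) + logStar m))
              = ENNReal.ofReal (X i ω * logStar (X i ω))
                + ENNReal.ofReal (X i ω) * ENNReal.ofReal (logStar m) := by
            intro ω
            rw [mul_add, ENNReal.ofReal_add
                (mul_nonneg (hnonneg i ω) (logStar_nonneg (hnonneg i ω)))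
                (mul_nonneg (hnonneg i ω) (logStar_nonneg hm_nonneg))]
            congr 1
            exact ENNReal.ofReal_mul (hnonneg i ω)
          have hmeasf : Measurable fun ω => ENNReal.ofReal (X i ω * logStar (X i ω)) :=
            ((hmeas i).mul (measurable_logStar.comp (hmeas i))).ennreal_ofReal
          rw [lintegral_congr hsplit,
            lintegral_add_left hmeasf,
            lintegral_mul_const _ ((hmeas i).ennreal_ofReal),
            ← ofReal_integral_eq_lintegral_ofReal (hint i) (ae_of_all _ (hnonneg i)),
            ← ENNReal.ofReal_mul (hmi_nonneg i)]
  -- conclude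
  calc ∑ i, ∫⁻ ω, ENNReal.ofReal (X i ω * logStar (∑ j, X j ω)) ∂μ
      ≤ ∑ i, (∫⁻ ω, ENNReal.ofReal (X i ω * logStar (X i ω)) ∂μ
          + ENNReal.ofReal ((∫ ω, X i ω ∂μ) * logStar m)) :=
        Finset.sum_le_sum fun i _ => hB i
    _ = ENNReal.ofReal (m * logStar m)
          + ∑ i, ∫⁻ ω, ENNReal.ofReal (X i ω * logStar (X i ω)) ∂μ := by
        rw [Finset.sum_add_distrib, ← ENNReal.ofReal_sum_of_nonneg
          (fun i _ => mul_nonneg (hmi_nonneg i) (logStar_nonneg hm_nonneg)),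
          ← Finset.sum_mul, ← hm_sum, add_comm]

end
end

section
/- Let X₁, …, Xₙ be independent nonnegative integrable random variables with 𝔼(X_i·log*(X_i)) < ∞ for every i, let S_n = X₁ + … + Xₙ, and let (ℱ_k) be the natural filtration ℱ_k = σ(X₁, …, X_k). Then for every integer 0 ≤ q ≤ n, almost surely 𝔼(S_n·log*(S_n) | ℱ_{n−q}) ≤ 𝔼(S_n | ℱ_{n−q})·log*(𝔼(S_n | ℱ_{n−q})) + Σ_{i=1}^n 𝔼(X_i·log*(X_i) | ℱ_{n−q}). -/
open MeasureTheory ProbabilityTheory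
open scoped ENNReal

noncomputable section

/-- The natural filtration `ℱ_k = σ(X₁, …, X_k)` of a finite family of real random
variables `X : Fin n → Ω → ℝ` (the index `i : Fin n` represents `X_{i+1}`). -/
def natFiltration {Ω : Type*} [MeasurableSpace Ω] {n : ℕ} (X : Fin n → Ω → ℝ)
    (k : ℕ) : MeasurableSpace Ω :=
  ⨆ i : Fin n, ⨆ _ : (i : ℕ) < k, MeasurableSpace.comap (X i) inferInstance

/-- The sigma algebra generated by all the variables except the `i`-th one. -/
@[irreducible] def sigmaCompl {Ω : Type*} [MeasurableSpace Ω] {n : ℕ} (X : Fin n → Ω → ℝ)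
    (i : Fin n) : MeasurableSpace Ω :=
  ⨆ j ∈ ({i} : Set (Fin n))ᶜ, MeasurableSpace.comap (X j) inferInstance

section AuxReal

lemma epos : (0:ℝ) < Real.exp 1 := Real.exp_pos 1

lemma logStar_le_div {x : ℝ} (hx : 0 ≤ x) : logStar x ≤ x / Real.exp 1 := by
  unfold logStar
  split_ifs with h
  · exact le_rfl
  · exact log_le_div_e (lt_trans epos (lt_of_not_ge h))

def dSlope' (y : ℝ) : ℝ := if y ≤ Real.exp 1 then (Real.exp 1)⁻¹ else y⁻¹

lemma dSlope'_nonneg (y : ℝ) : 0 ≤ dSlope' y := by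
  unfold dSlope'; split_ifs with h
  · positivity
  · exact inv_nonneg.2 (by nlinarith [epos, lt_of_not_ge h])

lemma dSlope'_le (y : ℝ) : dSlope' y ≤ (Real.exp 1)⁻¹ := by
  unfold dSlope'; split_ifs with h
  · exact le_rfl
  · exact inv_anti₀ epos (le_of_lt (lt_of_not_ge h))

lemma logStar_tangent {x y : ℝ} (hx : 0 ≤ x) :
    logStar x ≤ logStar y + dSlope' y * (x - y) := by
  unfold logStar dSlope'
  split_ifs with hxx hy hy
  · have h0 : y / Real.exp 1 + (Real.exp 1)⁻¹ * (x - y) = x / Real.exp 1 := by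
      field_simp; ring
    rw [h0]
  · have hy' := lt_of_not_ge hy
    have hypos : 0 < y := lt_trans epos hy'
    have h1 : 2 - Real.exp 1 / y ≤ Real.log y := by
      have := Real.log_le_sub_one_of_pos (x := Real.exp 1 / y) (div_pos epos hypos)
      rw [Real.log_div (ne_of_gt epos) (ne_of_gt hypos), Real.log_exp] at this
      linarith
    rw [inv_mul_eq_div]
    have he : (0:ℝ) < Real.exp 1 := epos
    rw [div_le_iff₀ he] at *
    have h2 : (Real.log y + (x - y) / y) * Real.exp 1 =
        Real.log y * Real.exp 1 + (x - y) * Real.exp 1 / y := by ring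
    rw [h2]
    have h3 : (2 - Real.exp 1 / y) * Real.exp 1 ≤ Real.log y * Real.exp 1 :=
      mul_le_mul_of_nonneg_right h1 he.le
    have h4 : (2 - Real.exp 1 / y) * Real.exp 1 + (x - y) * Real.exp 1 / y - x =
        (y - Real.exp 1) * (Real.exp 1 - x) / y := by field_simp; ring
    nlinarith [div_nonneg (mul_nonneg (by linarith : (0:ℝ) ≤ y - Real.exp 1)
      (by linarith : (0:ℝ) ≤ Real.exp 1 - x)) hypos.le]
  · have : y / Real.exp 1 + (Real.exp 1)⁻¹ * (x - y) = x / Real.exp 1 := by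
      field_simp; ring
    rw [this]
    exact log_le_div_e (lt_trans epos (lt_of_not_ge hxx))
  · have hxpos : 0 < x := lt_trans epos (lt_of_not_ge hxx)
    have hypos : 0 < y := lt_trans epos (lt_of_not_ge hy)
    have := Real.log_le_sub_one_of_pos (x := x / y) (div_pos hxpos hypos)
    rw [Real.log_div (ne_of_gt hxpos) (ne_of_gt hypos)] at this
    rw [inv_mul_eq_div]
    have hsub : (x - y) / y = x / y - 1 := by field_simp
    rw [hsub]; linarith

lemma measurable_dSlope' : Measurable dSlope' := by
  unfold dSlope'
  exact Measurable.ite (measurableSet_le measurable_id measurable_const)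
    measurable_const measurable_inv

end AuxReal

set_option maxHeartbeats 1000000 in
/-- Conditional version of Lemma A.1: for independent nonnegative integrable random
variables `X₁, …, Xₙ` with `𝔼(Xᵢ log* Xᵢ) < ∞`, sum `Sₙ`, and natural filtration
`ℱ_k = σ(X₁,…,X_k)`, for every `0 ≤ q ≤ n`, almost surely
`𝔼(Sₙ log* Sₙ | ℱ_{n−q}) ≤ 𝔼(Sₙ | ℱ_{n−q})·log*(𝔼(Sₙ | ℱ_{n−q})) + Σᵢ 𝔼(Xᵢ log* Xᵢ | ℱ_{n−q})`. -/
theorem condexp_sum_mul_logStar_le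
    {Ω : Type*} [MeasurableSpace Ω] (μ : Measure Ω) [IsProbabilityMeasure μ]
    (n : ℕ) (X : Fin n → Ω → ℝ)
    (hmeas : ∀ i, Measurable (X i))
    (hindep : iIndepFun X μ)
    (hnonneg : ∀ i ω, 0 ≤ X i ω)
    (hint : ∀ i, Integrable (X i) μ)
    (hllog : ∀ i, ∫⁻ ω, ENNReal.ofReal (X i ω * logStar (X i ω)) ∂ μ ≠ ⊤)
    (q : ℕ) (hq : q ≤ n) :
    ∀ᵐ ω ∂ μ,
      (μ[(fun ω' => (∑ i, X i ω') * logStar (∑ i, X i ω')) |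
          natFiltration X (n - q)]) ω
        ≤ (μ[(fun ω' => ∑ i, X i ω') | natFiltration X (n - q)]) ω
            * logStar ((μ[(fun ω' => ∑ i, X i ω') | natFiltration X (n - q)]) ω)
          + ∑ i, (μ[(fun ω' => X i ω' * logStar (X i ω')) |
              natFiltration X (n - q)]) ω := by
  classical
  set k := n - q with hkdef
  have hF : natFiltration X k ≤ ‹MeasurableSpace Ω› :=
    iSup_le fun i => iSup_le fun _ => measurable_iff_comap_le.1 (hmeas i)
  haveI : SigmaFinite (μ.trim hF) := inferInstance
  -- means
  set m' : Fin n → ℝ := fun i => ∫ ω, X i ω ∂μ with hm'def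
  have hm'nonneg : ∀ i, 0 ≤ m' i := fun i => integral_nonneg (hnonneg i)
  set c : Fin n → Ω → ℝ := fun i ω => if (i : ℕ) < k then X i ω else m' i with hcdef
  have hc_nonneg : ∀ i ω, 0 ≤ c i ω := by
    intro i ω; by_cases h : (i : ℕ) < k <;> simp [hcdef, h, hnonneg i ω, hm'nonneg i]
  set Y : Ω → ℝ := fun ω => ∑ i, c i ω with hYdef
  have hY_nonneg : ∀ ω, 0 ≤ Y ω := fun ω => Finset.sum_nonneg fun i _ => hc_nonneg i ω
  -- measurability wrt the filtration
  have hXF : ∀ i : Fin n, (i : ℕ) < k → Measurable[natFiltration X k] (X i) := by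
    intro i hik
    have h1 : Measurable[MeasurableSpace.comap (X i) inferInstance] (X i) :=
      measurable_iff_comap_le.2 le_rfl
    exact h1.mono (le_iSup_of_le i (le_iSup_of_le hik le_rfl)) le_rfl
  have hcF : ∀ i, Measurable[natFiltration X k] (c i) := by
    intro i
    by_cases h : (i : ℕ) < k
    · simpa [hcdef, h] using hXF i h
    · simpa [hcdef, h] using
        (measurable_const : Measurable[natFiltration X k] fun _ : Ω => m' i)
  have hYF : Measurable[natFiltration X k] Y := Finset.measurable_sum _ fun i _ => hcF i
  have hYmeas : Measurable Y := hYF.mono hF le_rfl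
  -- the sigma algebra sigmaCompl generated by all but i
  have hGle : ∀ i, sigmaCompl X i ≤ ‹MeasurableSpace Ω› := by
    intro i
    rw [sigmaCompl]
    exact iSup_le fun j => iSup_le fun _ => measurable_iff_comap_le.1 (hmeas j)
  have hsigG : ∀ i, SigmaFinite (μ.trim (hGle i)) := fun i => isFiniteMeasure_trim (hGle i) |>.toSigmaFinite
  have hFG : ∀ i : Fin n, ¬ (i : ℕ) < k → natFiltration X k ≤ sigmaCompl X i := by
    intro i hik
    rw [sigmaCompl]
    refine iSup_le fun j => iSup_le fun hj => ?_
    have hji : j ∈ ({i} : Set (Fin n))ᶜ := by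
      simp only [Set.mem_compl_iff, Set.mem_singleton_iff]
      intro hcon
      exact hik (hcon ▸ hj)
    exact le_iSup_of_le j (le_iSup_of_le hji le_rfl)
  have hindepG : ∀ i, Indep (MeasurableSpace.comap (X i) inferInstance) (sigmaCompl X i) μ := by
    intro i
    rw [sigmaCompl]
    have h := indep_biSup_compl (fun j => measurable_iff_comap_le.1 (hmeas j)) hindep {i}
    have hsing : (⨆ j ∈ ({i} : Set (Fin n)), MeasurableSpace.comap (X j)
        (inferInstance : MeasurableSpace ℝ)) =
        MeasurableSpace.comap (X i) inferInstance := by simp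
    rwa [hsing] at h
  -- conditional expectations of the X i
  have hcond : ∀ i, μ[X i | natFiltration X k] =ᵐ[μ] c i := by
    intro i
    by_cases h : (i : ℕ) < k
    · have := condExp_of_stronglyMeasurable hF ((hXF i h).stronglyMeasurable) (hint i)
      rw [this]
      refine Filter.EventuallyEq.of_eq ?_
      funext ω; simp [hcdef, h]
    · have hsm : StronglyMeasurable[MeasurableSpace.comap (X i) inferInstance] (X i) :=
        (measurable_iff_comap_le.2 le_rfl).stronglyMeasurable
      have hindepF : Indep (MeasurableSpace.comap (X i) inferInstance) (natFiltration X k) μ :=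
        indep_of_indep_of_le_right (hindepG i) (hFG i h)
      have := condExp_indep_eq (measurable_iff_comap_le.1 (hmeas i)) hF hsm hindepF
      refine this.trans (Filter.EventuallyEq.of_eq ?_)
      funext ω; simp [hcdef, h, hm'def]
  -- condexp of the sum S
  have hSsum : (fun ω => ∑ i, X i ω) = ∑ i, X i := by
    funext ω; simp
  have hY_eq : μ[(fun ω' => ∑ i, X i ω') | natFiltration X k] =ᵐ[μ] Y := by
    rw [hSsum]
    refine (condExp_finset_sum (fun i _ => hint i) _).trans ?_
    have h1 : ∀ᵐ ω ∂μ, ∀ i : Fin n, (μ[X i | natFiltration X k]) ω = c i ω :=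
      (ae_all_iff).2 fun i => hcond i
    filter_upwards [h1] with ω hω
    simp only [Finset.sum_apply]
    exact Finset.sum_congr rfl fun i _ => hω i
  -- finsets of indices
  set SR : Finset (Fin n) := Finset.univ.filter (fun j => ¬ (j : ℕ) < k) with hSRdef
  set SL : Finset (Fin n) := Finset.univ.filter (fun j => (j : ℕ) < k) with hSLdef
  set mR : ℝ := ∑ j ∈ SR, m' j with hmRdef
  set ρ : Fin n → ℝ := fun i => ∑ j ∈ SR.erase i, m' j with hρdef
  set T : Fin n → Ω → ℝ := fun i ω => ∑ j ∈ Finset.univ.erase i, X j ω with hTdef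
  set U : Fin n → Ω → ℝ := fun i ω => ∑ j ∈ SR.erase i, X j ω with hUdef
  set Hf : Fin n → Ω → ℝ :=
    fun i ω => logStar (Y ω) + dSlope' (Y ω) * (U i ω - mR) with hHdef
  have hρ_le : ∀ i, ρ i ≤ mR := fun i =>
    Finset.sum_le_sum_of_subset_of_nonneg (Finset.erase_subset _ _)
      (fun j _ _ => hm'nonneg j)
  have hT_nonneg : ∀ i ω, 0 ≤ T i ω := fun i ω =>
    Finset.sum_nonneg fun j _ => hnonneg j ω
  have hU_nonneg : ∀ i ω, 0 ≤ U i ω := fun i ω =>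
    Finset.sum_nonneg fun j _ => hnonneg j ω
  have hsplit : ∀ (i : Fin n) ω, (∑ j, X j ω) = X i ω + T i ω := fun i ω =>
    (Finset.add_sum_erase _ _ (Finset.mem_univ i)).symm
  have hSY : ∀ ω, (∑ j, X j ω) - Y ω = (∑ j ∈ SR, X j ω) - mR := by
    intro ω
    have h1 : (∑ j, X j ω) - Y ω = ∑ j, (X j ω - c j ω) := by
      rw [hYdef, Finset.sum_sub_distrib]
    have h2 : ∑ j, (X j ω - c j ω) = ∑ j ∈ SR, (X j ω - c j ω) := by
      refine (Finset.sum_subset (Finset.subset_univ SR) ?_).symm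
      intro j _ hj
      have hjk : (j : ℕ) < k := by
        by_contra hc
        exact hj (by simp only [hSRdef, Finset.mem_filter, Finset.mem_univ, true_and]; exact hc)
      simp [hcdef, hjk]
    have h3 : ∑ j ∈ SR, (X j ω - c j ω) = (∑ j ∈ SR, X j ω) - mR := by
      rw [Finset.sum_sub_distrib, hmRdef]
      congr 1
      refine Finset.sum_congr rfl fun j hj => ?_
      have hjk : ¬ (j : ℕ) < k := by
        simpa [hSRdef] using hj
      simp [hcdef, hjk]
    rw [h1, h2, h3]
  have hTU : ∀ i ω, T i ω - Y ω ≤ U i ω - mR := by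
    intro i ω
    have hTS : T i ω = (∑ j, X j ω) - X i ω := by
      rw [hsplit i ω]; ring
    by_cases hi : i ∈ SR
    · have : (∑ j ∈ SR, X j ω) = X i ω + U i ω :=
        (Finset.add_sum_erase _ _ hi).symm
      have := hSY ω
      rw [hTS]
      linarith
    · have he : SR.erase i = SR := Finset.erase_eq_of_notMem hi
      have hU : U i ω = ∑ j ∈ SR, X j ω := by rw [hUdef]; simp [he]
      have := hSY ω
      rw [hTS]
      have := hnonneg i ω
      linarith
  -- pointwise key inequality
  have hpt : ∀ ω, (∑ i, X i ω) * logStar (∑ i, X i ω)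
      ≤ ∑ i, (X i ω * logStar (X i ω) + X i ω * Hf i ω) := by
    intro ω
    rw [Finset.sum_mul]
    refine Finset.sum_le_sum fun i _ => ?_
    have hXnn := hnonneg i ω
    have hTnn := hT_nonneg i ω
    have h1 : logStar (∑ j, X j ω) ≤ logStar (X i ω) + logStar (T i ω) := by
      rw [hsplit i ω]
      exact logStar_add_le hXnn hTnn
    have h2 : logStar (T i ω) ≤ logStar (Y ω) + dSlope' (Y ω) * (T i ω - Y ω) :=
      logStar_tangent hTnn
    have h3 : dSlope' (Y ω) * (T i ω - Y ω) ≤ dSlope' (Y ω) * (U i ω - mR) :=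
      mul_le_mul_of_nonneg_left (hTU i ω) (dSlope'_nonneg _)
    have h4 : logStar (∑ j, X j ω) ≤ logStar (X i ω) + Hf i ω := by
      rw [hHdef]; dsimp only; linarith
    calc X i ω * logStar (∑ j, X j ω)
        ≤ X i ω * (logStar (X i ω) + Hf i ω) :=
          mul_le_mul_of_nonneg_left h4 hXnn
      _ = X i ω * logStar (X i ω) + X i ω * Hf i ω := by ring
  -- integrability
  have hmulLog : ∀ i, Integrable (fun ω => X i ω * logStar (X i ω)) μ := by
    intro i
    refine ⟨((hmeas i).mul (measurable_logStar.comp (hmeas i))).aestronglyMeasurable, ?_⟩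
    rw [hasFiniteIntegral_iff_ofReal (ae_of_all _ fun ω =>
      mul_nonneg (hnonneg i ω) (logStar_nonneg (hnonneg i ω)))]
    exact lt_top_iff_ne_top.2 (hllog i)
  have intc : ∀ i, Integrable (c i) μ := by
    intro i
    by_cases hik : (i : ℕ) < k
    · simpa [hcdef, hik] using hint i
    · simpa [hcdef, hik] using (integrable_const (m' i) : Integrable _ μ)
  have intY : Integrable Y μ := by
    rw [hYdef]; exact integrable_finset_sum _ fun i _ => intc i
  have intT : ∀ i, Integrable (T i) μ := by
    intro i; rw [hTdef]; exact integrable_finset_sum _ fun j _ => hint j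
  have intU : ∀ i, Integrable (U i) μ := by
    intro i; rw [hUdef]; exact integrable_finset_sum _ fun j _ => hint j
  have intlogY : Integrable (fun ω => logStar (Y ω)) μ := by
    refine Integrable.mono' (intY.div_const (Real.exp 1))
      ((measurable_logStar.comp hYmeas).aestronglyMeasurable)
      (ae_of_all _ fun ω => ?_)
    rw [Real.norm_eq_abs, abs_of_nonneg (logStar_nonneg (hY_nonneg ω))]
    exact logStar_le_div (hY_nonneg ω)
  have hIndepSum : ∀ (s : Finset (Fin n)) (i : Fin n), i ∉ s →
      IndepFun (fun ω => ∑ j ∈ s, X j ω) (X i) μ := by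
    intro s i hi
    have h := hindep.indepFun_finsetSum_of_notMem hmeas hi
    have hfe : (∑ j ∈ s, X j) = fun ω => ∑ j ∈ s, X j ω := by
      funext ω; simp
    rwa [hfe] at h
  have hdbound : ∀ t : ℝ, ‖dSlope' t‖ ≤ (Real.exp 1)⁻¹ := by
    intro t
    rw [Real.norm_eq_abs, abs_of_nonneg (dSlope'_nonneg t)]
    exact dSlope'_le t
  have intXlogY : ∀ i, Integrable (fun ω => X i ω * logStar (Y ω)) μ := by
    intro i
    have hYAb : ∀ ω, Y ω = (∑ j ∈ SL, X j ω) + mR := by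
      intro ω
      have hsplit2 : ∑ j ∈ SL, c j ω + ∑ j ∈ SR, c j ω = ∑ j, c j ω := by
        rw [hSLdef, hSRdef]
        exact Finset.sum_filter_add_sum_filter_not Finset.univ
          (fun j : Fin n => (j : ℕ) < k) _
      have h1 : ∑ j ∈ SL, c j ω = ∑ j ∈ SL, X j ω :=
        Finset.sum_congr rfl fun j hj => by
          have : (j : ℕ) < k := by simpa [hSLdef] using hj
          simp [hcdef, this]
      have h2 : ∑ j ∈ SR, c j ω = mR := by
        rw [hmRdef]
        refine Finset.sum_congr rfl fun j hj => ?_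
        have : ¬ (j : ℕ) < k := by simpa [hSRdef] using hj
        simp [hcdef, this]
      have h0 : Y ω = ∑ j, c j ω := rfl
      rw [h0, ← hsplit2, h1, h2]
    by_cases hik : (i : ℕ) < k
    · -- dominate by X i * logStar (X i) + X i * logStar (W i)
      have hiSL : i ∈ SL := by simp [hSLdef, hik]
      set W : Ω → ℝ := fun ω => (∑ j ∈ SL.erase i, X j ω) + mR with hWdef
      have hW_nonneg : ∀ ω, 0 ≤ W ω :=
        fun ω => add_nonneg (Finset.sum_nonneg fun j _ => hnonneg j ω)
          (Finset.sum_nonneg fun j _ => hm'nonneg j)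
      have hYW : ∀ ω, Y ω = X i ω + W ω := by
        intro ω
        rw [hYAb ω, hWdef, ← Finset.add_sum_erase _ _ hiSL]
        ring
      have hWmeas : Measurable W :=
        (Finset.measurable_sum _ fun j _ => hmeas j).add_const mR
      have hWindep : IndepFun (fun ω => logStar (W ω)) (X i) μ := by
        have h1 := hIndepSum (SL.erase i) i (Finset.notMem_erase i SL)
        have h2 := h1.comp (φ := fun t : ℝ => logStar (t + mR)) (ψ := id)
          (measurable_logStar.comp (measurable_id.add_const mR)) measurable_id
        exact h2
      have intlogW : Integrable (fun ω => logStar (W ω)) μ := by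
        have intW : Integrable W μ :=
          (integrable_finset_sum _ fun j _ => hint j).add (integrable_const mR)
        refine Integrable.mono' (intW.div_const (Real.exp 1))
          ((measurable_logStar.comp hWmeas).aestronglyMeasurable)
          (ae_of_all _ fun ω => ?_)
        rw [Real.norm_eq_abs, abs_of_nonneg (logStar_nonneg (hW_nonneg ω))]
        exact logStar_le_div (hW_nonneg ω)
      have intprod : Integrable (fun ω => X i ω * logStar (W ω)) μ :=
        hWindep.symm.integrable_mul (hint i) intlogW
      refine Integrable.mono' ((hmulLog i).add intprod)
        (((hmeas i).mul (measurable_logStar.comp hYmeas)).aestronglyMeasurable)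
        (ae_of_all _ fun ω => ?_)
      have hnn : 0 ≤ X i ω * logStar (Y ω) :=
        mul_nonneg (hnonneg i ω) (logStar_nonneg (hY_nonneg ω))
      rw [Real.norm_eq_abs, abs_of_nonneg hnn]
      have : logStar (Y ω) ≤ logStar (X i ω) + logStar (W ω) := by
        rw [hYW ω]
        exact logStar_add_le (hnonneg i ω) (hW_nonneg ω)
      calc X i ω * logStar (Y ω) ≤ X i ω * (logStar (X i ω) + logStar (W ω)) :=
            mul_le_mul_of_nonneg_left this (hnonneg i ω)
        _ = X i ω * logStar (X i ω) + X i ω * logStar (W ω) := by ring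
    · -- Y itself is independent of X i
      have hiSL : i ∉ SL := by simp [hSLdef, hik]
      have h1 := hIndepSum SL i hiSL
      have h2 := h1.comp (φ := fun t : ℝ => logStar (t + mR)) (ψ := id)
        (measurable_logStar.comp (measurable_id.add_const mR)) measurable_id
      have h3 : ((fun t : ℝ => logStar (t + mR)) ∘ fun ω => ∑ j ∈ SL, X j ω) =
          fun ω => logStar (Y ω) := by
        funext ω; simp [Function.comp, hYAb ω]
      rw [h3] at h2
      exact h2.symm.integrable_mul (hint i) intlogY
  have intXU : ∀ i, Integrable (fun ω => X i ω * U i ω) μ := by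
    intro i
    have h1 := hIndepSum (SR.erase i) i (Finset.notMem_erase i SR)
    exact h1.symm.integrable_mul (hint i) (intU i)
  have intdU : ∀ i, Integrable (fun ω => dSlope' (Y ω) * (U i ω - mR)) μ := by
    intro i
    exact Integrable.bdd_mul ((intU i).sub (integrable_const mR))
      ((measurable_dSlope'.comp hYmeas).aestronglyMeasurable)
      (ae_of_all _ fun ω => hdbound (Y ω))
  have intHf : ∀ i, Integrable (Hf i) μ := by
    intro i
    rw [hHdef]
    exact intlogY.add (intdU i)
  have intXHf : ∀ i, Integrable (fun ω => X i ω * Hf i ω) μ := by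
    intro i
    have hexp : (fun ω => X i ω * Hf i ω) = fun ω =>
        X i ω * logStar (Y ω) + (dSlope' (Y ω) * (X i ω * U i ω)
          - mR * (dSlope' (Y ω) * X i ω)) := by
      funext ω; rw [hHdef]; ring
    rw [hexp]
    refine (intXlogY i).add (Integrable.sub ?_ ?_)
    · exact Integrable.bdd_mul (intXU i)
        ((measurable_dSlope'.comp hYmeas).aestronglyMeasurable)
        (ae_of_all _ fun ω => hdbound (Y ω))
    · exact (Integrable.bdd_mul (hint i)
        ((measurable_dSlope'.comp hYmeas).aestronglyMeasurable)
        (ae_of_all _ fun ω => hdbound (Y ω))).const_mul mR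
  have intsum : Integrable (fun ω => ∑ i, (X i ω * logStar (X i ω) + X i ω * Hf i ω)) μ :=
    integrable_finset_sum _ fun i _ => (hmulLog i).add (intXHf i)
  have intφS : Integrable (fun ω' => (∑ i, X i ω') * logStar (∑ i, X i ω')) μ := by
    refine Integrable.mono' intsum
      (((Finset.measurable_sum _ fun j _ => hmeas j).mul (measurable_logStar.comp
        (Finset.measurable_sum _ fun j _ => hmeas j))).aestronglyMeasurable)
      (ae_of_all _ fun ω => ?_)
    have hSnn : (0:ℝ) ≤ ∑ i, X i ω := Finset.sum_nonneg fun i _ => hnonneg i ω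
    rw [Real.norm_eq_abs, abs_of_nonneg (mul_nonneg hSnn (logStar_nonneg hSnn))]
    exact hpt ω
  -- conditional expectation computations
  have hUcond : ∀ i, μ[U i | natFiltration X k] =ᵐ[μ] fun _ => ρ i := by
    intro i
    have hUeq : U i = ∑ j ∈ SR.erase i, X j := by
      funext ω; rw [hUdef]; simp
    rw [hUeq]
    refine (condExp_finset_sum (fun j _ => hint j) _).trans ?_
    have h1 : ∀ᵐ ω ∂μ, ∀ j : Fin n, (μ[X j | natFiltration X k]) ω = c j ω :=
      ae_all_iff.2 fun j => hcond j
    filter_upwards [h1] with ω hω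
    simp only [Finset.sum_apply]
    rw [hρdef]
    refine Finset.sum_congr rfl fun j hj => ?_
    have hjk : ¬ (j : ℕ) < k := by
      have := Finset.mem_of_mem_erase hj
      simpa [hSRdef] using this
    rw [hω j]
    simp [hcdef, hjk]
  have hHfcond : ∀ i, μ[Hf i | natFiltration X k] =ᵐ[μ]
      fun ω => logStar (Y ω) + dSlope' (Y ω) * (ρ i - mR) := by
    intro i
    have hHsplit : Hf i = (fun ω => logStar (Y ω)) + fun ω => dSlope' (Y ω) * (U i ω - mR) := by
      funext ω; rw [hHdef]; rfl
    rw [hHsplit]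
    refine (condExp_add intlogY (intdU i) _).trans ?_
    have h2 : μ[(fun ω => logStar (Y ω)) | natFiltration X k] = fun ω => logStar (Y ω) :=
      condExp_of_stronglyMeasurable hF
        ((measurable_logStar.comp hYF).stronglyMeasurable) intlogY
    have h3 : μ[(fun ω => dSlope' (Y ω) * (U i ω - mR)) | natFiltration X k]
        =ᵐ[μ] (fun ω => dSlope' (Y ω)) * μ[(fun ω => U i ω - mR) | natFiltration X k] :=
      condExp_mul_of_stronglyMeasurable_left ((measurable_dSlope'.comp hYF).stronglyMeasurable)
        (intdU i) ((intU i).sub (integrable_const mR))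
    have h4 : μ[(fun ω => U i ω - mR) | natFiltration X k] =ᵐ[μ] fun _ => ρ i - mR := by
      have h5 : μ[(fun ω => U i ω - mR) | natFiltration X k]
          =ᵐ[μ] μ[U i | natFiltration X k] - μ[(fun _ => mR) | natFiltration X k] :=
        condExp_sub (intU i) (integrable_const mR) _
      refine h5.trans ?_
      have h6 : μ[(fun _ : Ω => mR) | natFiltration X k] = fun _ => mR :=
        condExp_const hF mR
      filter_upwards [hUcond i] with ω hω
      rw [Pi.sub_apply, hω, h6]
    filter_upwards [h3, h4] with ω e3 e4
    have e2 := congrFun h2 ω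
    rw [Pi.add_apply, e2, e3, Pi.mul_apply, e4]
  have hkey : ∀ i, μ[(fun ω => X i ω * Hf i ω) | natFiltration X k] ≤ᵐ[μ]
      fun ω => c i ω * logStar (Y ω) := by
    intro i
    by_cases hik : (i : ℕ) < k
    · have h1 : μ[(fun ω => X i ω * Hf i ω) | natFiltration X k]
          =ᵐ[μ] X i * μ[Hf i | natFiltration X k] :=
        condExp_mul_of_stronglyMeasurable_left ((hXF i hik).stronglyMeasurable)
          (intXHf i) (intHf i)
      filter_upwards [h1, hHfcond i] with ω e1 e2
      rw [e1, Pi.mul_apply, e2]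
      have hc : c i ω = X i ω := by simp [hcdef, hik]
      rw [hc]
      have hd : dSlope' (Y ω) * (ρ i - mR) ≤ 0 :=
        mul_nonpos_of_nonneg_of_nonpos (dSlope'_nonneg _) (by linarith [hρ_le i])
      have hprod : X i ω * (dSlope' (Y ω) * (ρ i - mR)) ≤ 0 :=
        mul_nonpos_of_nonneg_of_nonpos (hnonneg i ω) hd
      nlinarith [hprod]
    · haveI := hsigG i
      have hYG : Measurable[sigmaCompl X i] Y := hYF.mono (hFG i hik) le_rfl
      have hXjG : ∀ j : Fin n, j ≠ i → Measurable[sigmaCompl X i] (X j) := by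
        intro j hj
        have h1 : Measurable[MeasurableSpace.comap (X j) inferInstance] (X j) :=
          measurable_iff_comap_le.2 le_rfl
        refine h1.mono ?_ le_rfl
        rw [sigmaCompl]
        exact le_iSup_of_le j (le_iSup_of_le (by simp [hj]) le_rfl)
      have hUG : Measurable[sigmaCompl X i] (U i) := by
        rw [hUdef]
        exact Finset.measurable_sum _ fun j hj => hXjG j (Finset.ne_of_mem_erase hj)
      have hHfG : StronglyMeasurable[sigmaCompl X i] (Hf i) := by
        rw [hHdef]
        exact ((measurable_logStar.comp hYG).add ((measurable_dSlope'.comp hYG).mul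
          (hUG.sub measurable_const))).stronglyMeasurable
      have hcomm : (fun ω => X i ω * Hf i ω) = fun ω => Hf i ω * X i ω := by
        funext ω; ring
      have h1 : μ[(fun ω => Hf i ω * X i ω) | sigmaCompl X i]
          =ᵐ[μ] Hf i * μ[X i | sigmaCompl X i] :=
        condExp_mul_of_stronglyMeasurable_left hHfG
          ((intXHf i).congr (ae_of_all _ fun ω => mul_comm (X i ω) (Hf i ω))) (hint i)
      have h2 : μ[X i | sigmaCompl X i] =ᵐ[μ] fun _ => m' i :=
        condExp_indep_eq (measurable_iff_comap_le.1 (hmeas i)) (hGle i)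
          ((measurable_iff_comap_le.2 le_rfl :
            Measurable[MeasurableSpace.comap (X i) inferInstance] (X i)).stronglyMeasurable)
          (hindepG i)
      have h3 : μ[(fun ω => X i ω * Hf i ω) | sigmaCompl X i]
          =ᵐ[μ] fun ω => m' i * Hf i ω := by
        refine (condExp_congr_ae (Filter.EventuallyEq.of_eq hcomm)).trans (h1.trans ?_)
        filter_upwards [h2] with ω e2
        rw [Pi.mul_apply, e2, mul_comm]
      have h4 : μ[(fun ω => X i ω * Hf i ω) | natFiltration X k]
          =ᵐ[μ] μ[(fun ω => m' i * Hf i ω) | natFiltration X k] :=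
        (condExp_condExp_of_le (hFG i hik) (hGle i)).symm.trans (condExp_congr_ae h3)
      have h5 : μ[(fun ω => m' i * Hf i ω) | natFiltration X k]
          =ᵐ[μ] fun ω => m' i * (μ[Hf i | natFiltration X k]) ω := by
        have h6 := condExp_smul (μ := μ) (m := natFiltration X k) (m' i) (Hf i)
        exact h6
      filter_upwards [h4, h5, hHfcond i] with ω e4 e5 e6
      rw [e4, e5, e6]
      have hc : c i ω = m' i := by simp [hcdef, hik]
      rw [hc]
      have hd : dSlope' (Y ω) * (ρ i - mR) ≤ 0 :=
        mul_nonpos_of_nonneg_of_nonpos (dSlope'_nonneg _) (by linarith [hρ_le i])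
      have hprod : m' i * (dSlope' (Y ω) * (ρ i - mR)) ≤ 0 :=
        mul_nonpos_of_nonneg_of_nonpos (hm'nonneg i) hd
      nlinarith [hprod]
  -- assembly
  have hsum_eq : (fun ω => ∑ i, (X i ω * logStar (X i ω) + X i ω * Hf i ω)) =
      ∑ i, ((fun ω' => X i ω' * logStar (X i ω')) + fun ω' => X i ω' * Hf i ω') := by
    funext ω; simp [Finset.sum_apply]
  have hcondsum : μ[(fun ω => ∑ i, (X i ω * logStar (X i ω) + X i ω * Hf i ω)) |
      natFiltration X k] =ᵐ[μ] fun ω => ∑ i,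
        ((μ[(fun ω' => X i ω' * logStar (X i ω')) | natFiltration X k]) ω
          + (μ[(fun ω' => X i ω' * Hf i ω') | natFiltration X k]) ω) := by
    rw [hsum_eq]
    refine (condExp_finset_sum (fun i _ => ((hmulLog i).add (intXHf i))) _).trans ?_
    have h1 : ∀ᵐ ω ∂μ, ∀ i : Fin n,
        (μ[((fun ω' => X i ω' * logStar (X i ω')) + fun ω' => X i ω' * Hf i ω') |
          natFiltration X k]) ω
          = (μ[(fun ω' => X i ω' * logStar (X i ω')) | natFiltration X k]) ω
            + (μ[(fun ω' => X i ω' * Hf i ω') | natFiltration X k]) ω := by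
      refine ae_all_iff.2 fun i => ?_
      filter_upwards [condExp_add (μ := μ) (m := natFiltration X k)
        (hmulLog i) (intXHf i)] with ω e
      rw [e, Pi.add_apply]
    filter_upwards [h1] with ω hω
    simp only [Finset.sum_apply]
    exact Finset.sum_congr rfl fun i _ => hω i
  have hmono := condExp_mono (m := natFiltration X k) intφS intsum (ae_of_all μ hpt)
  have hkey' : ∀ᵐ ω ∂μ, ∀ i : Fin n,
      (μ[(fun ω' => X i ω' * Hf i ω') | natFiltration X k]) ω ≤ c i ω * logStar (Y ω) :=
    ae_all_iff.2 fun i => hkey i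
  filter_upwards [hmono, hcondsum, hkey', hY_eq] with ω h1 h2 h3 h4
  calc (μ[(fun ω' => (∑ i, X i ω') * logStar (∑ i, X i ω')) | natFiltration X k]) ω
      ≤ (μ[(fun ω => ∑ i, (X i ω * logStar (X i ω) + X i ω * Hf i ω)) |
          natFiltration X k]) ω := h1
    _ = ∑ i, ((μ[(fun ω' => X i ω' * logStar (X i ω')) | natFiltration X k]) ω
          + (μ[(fun ω' => X i ω' * Hf i ω') | natFiltration X k]) ω) := h2
    _ ≤ ∑ i, ((μ[(fun ω' => X i ω' * logStar (X i ω')) | natFiltration X k]) ω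
          + c i ω * logStar (Y ω)) := Finset.sum_le_sum fun i _ => add_le_add le_rfl (h3 i)
    _ = (∑ i, (μ[(fun ω' => X i ω' * logStar (X i ω')) | natFiltration X k]) ω)
          + (∑ i, c i ω) * logStar (Y ω) := by
        rw [Finset.sum_add_distrib, Finset.sum_mul]
    _ = (μ[(fun ω' => ∑ i, X i ω') | natFiltration X k]) ω
          * logStar ((μ[(fun ω' => ∑ i, X i ω') | natFiltration X k]) ω)
          + ∑ i, (μ[(fun ω' => X i ω' * logStar (X i ω')) | natFiltration X k]) ω := by
        rw [h4]
        have hYc : (∑ i, c i ω) = Y ω := rfl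
        rw [hYc]
        ring

end
end
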